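/- Fix S ⊆ {0,...,9} and z ≥ 5. Then Q_S(X) = Q_S(X;z) + O((|S|+1)(X/z + √X)), with an absolute implied constant, where Q_S(X) counts n ≤ X with n and 10n+d square-free for all d ∈ S, and Q_S(X;z) counts n ≤ X avoiding the bad residues B_p(S) mod p² for all primes p ≤ z. -/

import Mathlib

open Finset

/-- `Q_S(X)` : the number of `1 ≤ n ≤ X` with `n` and all `10n+d` (`d ∈ S`) squarefree. -/
def Q (S : Finset ℕ) (X : ℕ) : ℕ :=
  ((Finset.Icc 1 X).filter
    (fun n => Squarefree n ∧ ∀ d ∈ S, Squarefree (10 * n + d))).card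

/-- `Q_S(X; z)`: the number of `1 ≤ n ≤ X` avoiding all bad residues mod `p²` for primes `p ≤ z`. -/
def Qz (S : Finset ℕ) (X z : ℕ) : ℕ :=
  ((Finset.Icc 1 X).filter
    (fun n => ∀ p ≤ z, p.Prime → ¬(p ^ 2 ∣ n ∨ ∃ d ∈ S, p ^ 2 ∣ (10 * n + d)))).card

theorem stmt_5 :
    ∃ C : ℝ, 0 < C ∧ ∀ S ⊆ Finset.range 10, ∀ z ≥ 5, ∀ X : ℕ,
      |(Q S X : ℝ) - (Qz S X z : ℝ)| ≤
        C * ((S.card : ℝ) + 1) * ((X : ℝ) / (z : ℝ) + Real.sqrt X) := by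
  refine ⟨10, by norm_num, ?_⟩
  intro S hS z hz X
  have hz0 : 0 < z := by omega
  have hzR : (5:ℝ) ≤ z := by exact_mod_cast hz
  rcases Nat.eq_zero_or_pos X with rfl | hX
  · simp [Q, Qz]
  -- X ≥ 1 from here
  set N : ℕ := 10 * X + 9 with hN
  set A : Finset ℕ := (Finset.Icc 1 X).filter
    (fun n => Squarefree n ∧ ∀ d ∈ S, Squarefree (10 * n + d)) with hA
  set B : Finset ℕ := (Finset.Icc 1 X).filter
    (fun n => ∀ p ≤ z, p.Prime → ¬(p ^ 2 ∣ n ∨ ∃ d ∈ S, p ^ 2 ∣ (10 * n + d))) with hB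
  have hAB : A ⊆ B := by
    intro n hn
    simp only [hA, hB, mem_filter] at hn ⊢
    obtain ⟨hn1, hsq, hsqd⟩ := hn
    refine ⟨hn1, fun p _ hp => ?_⟩
    rintro (h | ⟨d, hd, h⟩)
    · exact hp.not_isUnit (hsq p (by rwa [← pow_two]))
    · exact hp.not_isUnit (hsqd d hd p (by rwa [← pow_two]))
  set P : Finset ℕ := (Finset.Ioc z N).filter Nat.Prime with hP
  set E : ℕ → Finset ℕ := fun p => (Finset.Icc 1 X).filter
    (fun n => p ^ 2 ∣ n ∨ ∃ d ∈ S, p ^ 2 ∣ (10 * n + d)) with hE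
  have hsub : B \ A ⊆ P.biUnion E := by
    intro n hn
    simp only [mem_sdiff, hA, hB, mem_filter, not_and] at hn
    obtain ⟨⟨hn1, hcond⟩, hbad⟩ := hn
    have hn0 : 1 ≤ n := (mem_Icc.mp hn1).1
    have hnX : n ≤ X := (mem_Icc.mp hn1).2
    have hbad' : ¬ Squarefree n ∨ ∃ d ∈ S, ¬ Squarefree (10 * n + d) := by
      by_cases hsq : Squarefree n
      · right
        have h2 := hbad hn1 hsq
        push_neg at h2
        exact h2
      · exact Or.inl hsq
    have key : ∃ p, p.Prime ∧ (p ^ 2 ∣ n ∨ ∃ d ∈ S, p ^ 2 ∣ (10 * n + d)) ∧ p ^ 2 ≤ N := by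
      rcases hbad' with h | ⟨d, hd, h⟩
      · rw [Nat.squarefree_iff_prime_squarefree] at h
        push_neg at h
        obtain ⟨p, hp, hdvd⟩ := h
        refine ⟨p, hp, Or.inl (by rwa [pow_two]), ?_⟩
        calc p ^ 2 ≤ n := by rw [pow_two]; exact Nat.le_of_dvd hn0 hdvd
        _ ≤ N := by omega
      · rw [Nat.squarefree_iff_prime_squarefree] at h
        push_neg at h
        obtain ⟨p, hp, hdvd⟩ := h
        have hd9 : d ≤ 9 := by have := hS hd; simp [Finset.mem_range] at this; omega
        refine ⟨p, hp, Or.inr ⟨d, hd, by rwa [pow_two]⟩, ?_⟩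
        calc p ^ 2 = p * p := pow_two p
        _ ≤ 10 * n + d := Nat.le_of_dvd (by omega) hdvd
        _ ≤ N := by omega
    obtain ⟨p, hp, hdvd, hpN⟩ := key
    have hpz : z < p := by
      by_contra hle
      exact hcond p (by omega) hp hdvd
    have hpleN : p ≤ N := le_trans (Nat.le_self_pow two_ne_zero p) hpN
    refine Finset.mem_biUnion.mpr ⟨p, ?_, ?_⟩
    · simp only [hP, mem_filter, mem_Ioc]
      exact ⟨⟨hpz, hpleN⟩, hp⟩
    · simp only [hE, mem_filter]
      exact ⟨hn1, hdvd⟩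
  -- cardinality bound for each E p
  have hEcard : ∀ p ∈ P, (E p).card ≤ X / p ^ 2 + S.card * (N / p ^ 2) := by
    intro p hp
    have hsplit : E p ⊆ ((Finset.Icc 1 X).filter (fun n => p ^ 2 ∣ n)) ∪
        S.biUnion (fun d => (Finset.Icc 1 X).filter (fun n => p ^ 2 ∣ (10 * n + d))) := by
      intro n hn
      simp only [hE, mem_filter] at hn
      rcases hn.2 with h | ⟨d, hd, h⟩
      · exact Finset.mem_union_left _ (mem_filter.mpr ⟨hn.1, h⟩)
      · exact Finset.mem_union_right _ (Finset.mem_biUnion.mpr ⟨d, hd, mem_filter.mpr ⟨hn.1, h⟩⟩)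
    have h1 : ((Finset.Icc 1 X).filter (fun n => p ^ 2 ∣ n)).card = X / p ^ 2 := by
      rw [show Finset.Icc 1 X = Finset.Ioc 0 X by rfl]
      exact Nat.Ioc_filter_dvd_card_eq_div X (p ^ 2)
    have h2 : ∀ d ∈ S, ((Finset.Icc 1 X).filter (fun n => p ^ 2 ∣ (10 * n + d))).card
        ≤ N / p ^ 2 := by
      intro d hd
      have hd9 : d ≤ 9 := by have := hS hd; simp [Finset.mem_range] at this; omega
      rw [← Nat.Ioc_filter_dvd_card_eq_div N (p ^ 2)]
      apply Finset.card_le_card_of_injOn (fun n => 10 * n + d)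
      · intro n hn
        simp only [mem_coe, mem_filter, mem_Icc] at hn
        simp only [mem_coe, mem_filter, mem_Ioc]
        exact ⟨⟨by omega, by omega⟩, hn.2⟩
      · intro a _ b _ hab
        have : 10 * a + d = 10 * b + d := hab
        omega
    calc (E p).card ≤ (((Finset.Icc 1 X).filter (fun n => p ^ 2 ∣ n)) ∪
          S.biUnion (fun d => (Finset.Icc 1 X).filter (fun n => p ^ 2 ∣ (10 * n + d)))).card :=
        Finset.card_le_card hsplit
      _ ≤ ((Finset.Icc 1 X).filter (fun n => p ^ 2 ∣ n)).card +
          (S.biUnion (fun d => (Finset.Icc 1 X).filter (fun n => p ^ 2 ∣ (10 * n + d)))).card :=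
        Finset.card_union_le _ _
      _ ≤ X / p ^ 2 + ∑ d ∈ S, ((Finset.Icc 1 X).filter (fun n => p ^ 2 ∣ (10 * n + d))).card := by
        rw [h1]; exact Nat.add_le_add_left (Finset.card_biUnion_le) _
      _ ≤ X / p ^ 2 + ∑ d ∈ S, N / p ^ 2 := by
        exact Nat.add_le_add_left (Finset.sum_le_sum h2) _
      _ = X / p ^ 2 + S.card * (N / p ^ 2) := by rw [Finset.sum_const, smul_eq_mul]
  -- real bound on each E p
  have hEreal : ∀ p ∈ P, ((E p).card : ℝ) ≤ ((X : ℝ) + S.card * N) * ((p : ℝ) ^ 2)⁻¹ := by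
    intro p hp
    have hppos : (0:ℝ) < (p:ℝ) ^ 2 := by
      have : 0 < p := by
        simp only [hP, mem_filter] at hp
        exact hp.2.pos
      positivity
    calc ((E p).card : ℝ) ≤ ((X / p ^ 2 + S.card * (N / p ^ 2) : ℕ) : ℝ) := by
          exact_mod_cast hEcard p hp
      _ = ((X / p ^ 2 : ℕ) : ℝ) + (S.card : ℝ) * ((N / p ^ 2 : ℕ) : ℝ) := by push_cast; ring
      _ ≤ (X : ℝ) / (p : ℝ) ^ 2 + (S.card : ℝ) * ((N : ℝ) / (p : ℝ) ^ 2) := by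
        have g1 : ((X / p ^ 2 : ℕ) : ℝ) ≤ (X : ℝ) / (p : ℝ) ^ 2 := by
          rw [show ((p:ℝ)^2) = ((p^2 : ℕ):ℝ) from (Nat.cast_pow p 2).symm]
          exact Nat.cast_div_le
        have g2 : ((N / p ^ 2 : ℕ) : ℝ) ≤ (N : ℝ) / (p : ℝ) ^ 2 := by
          rw [show ((p:ℝ)^2) = ((p^2 : ℕ):ℝ) from (Nat.cast_pow p 2).symm]
          exact Nat.cast_div_le
        have : (0:ℝ) ≤ (S.card : ℝ) := by positivity
        nlinarith
      _ = ((X : ℝ) + S.card * N) * ((p : ℝ) ^ 2)⁻¹ := by simp [div_eq_mul_inv, add_mul, mul_assoc]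
  -- sum of inverse squares over P
  have hinv : ∑ p ∈ P, ((p : ℝ) ^ 2)⁻¹ ≤ ((z : ℝ))⁻¹ := by
    have hPs : P ⊆ Finset.Ioc z N := Finset.filter_subset _ _
    have h1 : ∑ p ∈ P, ((p : ℝ) ^ 2)⁻¹ ≤ ∑ i ∈ Finset.Ioc z N, ((i : ℝ) ^ 2)⁻¹ :=
      Finset.sum_le_sum_of_subset_of_nonneg hPs (fun i _ _ => by positivity)
    rcases le_or_gt z N with hle | hlt
    · have := sum_Ioc_inv_sq_le_sub (α := ℝ) hz0.ne' hle
      have hNpos : (0:ℝ) ≤ ((N:ℝ))⁻¹ := by positivity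
      linarith
    · rw [Finset.Ioc_eq_empty (by omega)] at h1
      simp only [Finset.sum_empty] at h1
      have : (0:ℝ) ≤ ((z:ℝ))⁻¹ := by positivity
      linarith
  -- combine
  have hcard : ((B \ A).card : ℝ) ≤ ((X : ℝ) + S.card * N) * ((z : ℝ))⁻¹ := by
    have c1 : (B \ A).card ≤ ∑ p ∈ P, (E p).card :=
      le_trans (Finset.card_le_card hsub) (Finset.card_biUnion_le)
    have c2 : ((B \ A).card : ℝ) ≤ ∑ p ∈ P, ((E p).card : ℝ) := by exact_mod_cast c1
    have c3 : ∑ p ∈ P, ((E p).card : ℝ) ≤ ∑ p ∈ P, ((X : ℝ) + S.card * N) * ((p : ℝ) ^ 2)⁻¹ :=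
      Finset.sum_le_sum hEreal
    have c4 : ∑ p ∈ P, ((X : ℝ) + S.card * N) * ((p : ℝ) ^ 2)⁻¹
        = ((X : ℝ) + S.card * N) * ∑ p ∈ P, ((p : ℝ) ^ 2)⁻¹ := by
      rw [Finset.mul_sum]
    have hpos : (0:ℝ) ≤ (X : ℝ) + S.card * N := by positivity
    calc ((B \ A).card : ℝ) ≤ ((X : ℝ) + S.card * N) * ∑ p ∈ P, ((p : ℝ) ^ 2)⁻¹ := by
          rw [← c4]; linarith
      _ ≤ ((X : ℝ) + S.card * N) * ((z : ℝ))⁻¹ := by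
        exact mul_le_mul_of_nonneg_left hinv hpos
  -- final arithmetic
  have hQle : Q S X ≤ Qz S X z := Finset.card_le_card hAB
  have hdiff : (Qz S X z : ℝ) - (Q S X : ℝ) = ((B \ A).card : ℝ) := by
    have : (B \ A).card = Qz S X z - Q S X := by
      rw [Finset.card_sdiff_of_subset hAB]; rfl
    rw [this]
    have : (Q S X : ℝ) ≤ (Qz S X z : ℝ) := by exact_mod_cast hQle
    push_cast [Nat.cast_sub hQle]
    ring
  rw [abs_sub_comm, abs_of_nonneg (by
    have : (Q S X : ℝ) ≤ (Qz S X z : ℝ) := by exact_mod_cast hQle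
    linarith)]
  rw [hdiff]
  have hsqrt : (1:ℝ) ≤ Real.sqrt X := by
    rw [show (1:ℝ) = Real.sqrt 1 by simp]
    exact Real.sqrt_le_sqrt (by exact_mod_cast hX)
  have hzpos : (0:ℝ) < z := by linarith
  have hXR : (1:ℝ) ≤ (X:ℝ) := by exact_mod_cast hX
  have hNR : (N:ℝ) = 10 * X + 9 := by rw [hN]; push_cast; ring
  have hs0 : (0:ℝ) ≤ (S.card : ℝ) := by positivity
  calc ((B \ A).card : ℝ) ≤ ((X : ℝ) + S.card * N) * ((z : ℝ))⁻¹ := hcard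
    _ ≤ ((S.card : ℝ) + 1) * (N : ℝ) * ((z : ℝ))⁻¹ := by
      apply mul_le_mul_of_nonneg_right _ (by positivity)
      rw [hNR]; nlinarith
    _ = ((S.card : ℝ) + 1) * ((10 * X + 9) / z) := by
      rw [hNR]; ring
    _ ≤ 10 * ((S.card : ℝ) + 1) * ((X : ℝ) / (z : ℝ) + Real.sqrt X) := by
      have expand : 10 * ((S.card : ℝ) + 1) * ((X : ℝ) / (z : ℝ) + Real.sqrt X)
          = ((S.card : ℝ) + 1) * (10 * ((X:ℝ)/z) + 10 * Real.sqrt X) := by ring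
      rw [expand]
      apply mul_le_mul_of_nonneg_left _ (by positivity)
      have e1 : (10*(X:ℝ)+9)/z = 10*((X:ℝ)/z) + 9/z := by rw [add_div, mul_div_assoc]
      rw [e1]
      have e2 : (9:ℝ)/z ≤ 2 := by rw [div_le_iff₀ hzpos]; linarith
      linarith
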